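/- arXiv:math/0609049 — 4 statements merged into one kernel-verified Lean document; each statement's English description precedes it below -/
import Mathlib

section
/- For every nonnegative integer k, the polynomial identity ∑_{n=0}^{k+1} χ_n(k) t^n / n! = ∏_{j=0}^{k} (1 + C(k,j) t) holds in ℝ[t] (equivalently, n! times the elementary symmetric polynomial e_n of the k+1 binomial coefficients C(k,0),...,C(k,k) equals χ_n(k)). -/
/-- The number of set `k`-colorings of `n` urns: functions from `Fin n` to subsets of
`{1,...,k}` whose values have pairwise distinct cardinalities. -/
noncomputable def setChi (n k : ℕ) : ℕ :=
  Nat.card {c : Fin n → Finset (Fin k) // ∀ i j : Fin n, i ≠ j → (c i).card ≠ (c j).card}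

open Finset

private lemma card_filter_card_eq (k m : ℕ) :
    ((Finset.univ : Finset (Finset (Fin k))).filter (fun s => s.card = m)).card
      = k.choose m := by
  have h : (Finset.univ : Finset (Finset (Fin k))).filter (fun s => s.card = m)
      = Finset.powersetCard m (Finset.univ : Finset (Fin k)) := by
    ext t
    simp [Finset.mem_powersetCard]
  rw [h, Finset.card_powersetCard, Finset.card_univ, Fintype.card_fin]

private lemma setChi_eq_sum_inj (n k : ℕ) :
    setChi n k =
      ∑ d ∈ (Finset.univ : Finset (Fin n → Fin (k + 1))).filter Function.Injective,
        ∏ i, k.choose (d i : ℕ) := by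
  classical
  have hcast : ∀ c : Fin n → Finset (Fin k), ∀ i : Fin n, (c i).card < k + 1 := by
    intro c i
    exact Nat.lt_succ_of_le ((c i).card_le_univ.trans_eq (by simp))
  set φ : (Fin n → Finset (Fin k)) → (Fin n → Fin (k + 1)) :=
    fun c i => ⟨(c i).card, hcast c i⟩ with hφ
  have h1 : setChi n k = ((Finset.univ : Finset (Fin n → Finset (Fin k))).filter
      (fun c => ∀ i j : Fin n, i ≠ j → (c i).card ≠ (c j).card)).card := by
    rw [setChi, Nat.card_eq_fintype_card, Fintype.card_subtype]
  rw [h1]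
  rw [Finset.card_eq_sum_card_fiberwise (f := φ)
    (t := (Finset.univ : Finset (Fin n → Fin (k + 1))).filter Function.Injective)
    (by
      intro c hc
      simp only [Finset.mem_coe, Finset.mem_filter, Finset.mem_univ, true_and] at hc ⊢
      intro i j hij
      by_contra hne
      have : (c i).card = (c j).card := congrArg Fin.val hij
      exact hc i j hne this)]
  refine Finset.sum_congr rfl fun d hd => ?_
  simp only [Finset.mem_filter, Finset.mem_univ, true_and] at hd
  have h2 : ((Finset.univ : Finset (Fin n → Finset (Fin k))).filter
        (fun c => ∀ i j : Fin n, i ≠ j → (c i).card ≠ (c j).card)).filter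
        (fun c => φ c = d)
      = Fintype.piFinset (fun i => (Finset.univ : Finset (Finset (Fin k))).filter
          (fun s => s.card = (d i : ℕ))) := by
    ext c
    simp only [Finset.mem_filter, Finset.mem_univ, true_and, Fintype.mem_piFinset]
    constructor
    · rintro ⟨-, hc2⟩ i
      exact congrArg Fin.val (congrFun hc2 i)
    · intro h
      refine ⟨fun i j hij hcard => hij (hd ?_), ?_⟩
      · apply Fin.ext
        rw [← h i, ← h j, hcard]
      · funext i
        exact Fin.ext (h i)
  rw [h2, Fintype.card_piFinset]
  exact Finset.prod_congr rfl fun i _ => card_filter_card_eq k (d i : ℕ)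

private lemma fiber_card (n k : ℕ) (S : Finset (Fin (k + 1))) (hS : S.card = n) :
    ((Finset.univ : Finset (Fin n → Fin (k + 1))).filter
        (fun d => Function.Injective d ∧ Finset.univ.image d = S)).card
      = n.factorial := by
  classical
  rw [← Fintype.card_coe]
  have e : {d // d ∈ (Finset.univ : Finset (Fin n → Fin (k + 1))).filter
        (fun d => Function.Injective d ∧ Finset.univ.image d = S)}
      ≃ (Fin n ≃ {x // x ∈ S}) := by
    refine
      { toFun := fun d => Equiv.ofBijective
          (fun i => (⟨d.1 i, by
            have hd := (Finset.mem_filter.mp d.2).2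
            have hmem : d.1 i ∈ Finset.univ.image d.1 :=
              Finset.mem_image_of_mem _ (Finset.mem_univ i)
            rwa [hd.2] at hmem⟩ : {x // x ∈ S}))
          ?_
        invFun := fun e => ⟨fun i => (e i : Fin (k + 1)), ?_⟩
        left_inv := fun d => Subtype.ext (funext fun i => rfl)
        right_inv := fun e => Equiv.ext fun i => Subtype.ext rfl }
    · have hd := (Finset.mem_filter.mp d.2).2
      refine (Fintype.bijective_iff_injective_and_card _).mpr ⟨?_, by simp [hS]⟩
      intro a b hab
      exact hd.1 (congrArg Subtype.val hab)
    · refine Finset.mem_filter.mpr ⟨Finset.mem_univ _, ?_, ?_⟩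
      · intro a b hab
        exact e.injective (Subtype.ext hab)
      · ext x
        simp only [Finset.mem_image, Finset.mem_univ, true_and]
        constructor
        · rintro ⟨i, rfl⟩
          exact (e i).2
        · intro hx
          obtain ⟨i, hi⟩ := e.surjective ⟨x, hx⟩
          exact ⟨i, congrArg Subtype.val hi⟩
  rw [Fintype.card_congr e, Fintype.card_equiv (S.orderIsoOfFin hS).toEquiv,
    Fintype.card_fin]

private lemma sum_inj_eq (n k : ℕ) :
    (∑ d ∈ (Finset.univ : Finset (Fin n → Fin (k + 1))).filter Function.Injective,
        ∏ i, k.choose (d i : ℕ))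
      = n.factorial * ∑ S ∈ Finset.powersetCard n (Finset.univ : Finset (Fin (k + 1))),
          ∏ j ∈ S, k.choose (j : ℕ) := by
  classical
  rw [Finset.mul_sum]
  rw [← Finset.sum_fiberwise_of_maps_to (g := fun d => Finset.univ.image d)
    (t := Finset.powersetCard n (Finset.univ : Finset (Fin (k + 1))))
    (by
      intro d hd
      simp only [Finset.mem_filter, Finset.mem_univ, true_and] at hd
      rw [Finset.mem_powersetCard]
      exact ⟨Finset.subset_univ _, by rw [Finset.card_image_of_injective _ hd, Finset.card_univ,
        Fintype.card_fin]⟩)]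
  refine Finset.sum_congr rfl fun S hS => ?_
  rw [Finset.mem_powersetCard] at hS
  have hfib : (((Finset.univ : Finset (Fin n → Fin (k + 1))).filter
        Function.Injective).filter (fun d => Finset.univ.image d = S))
      = (Finset.univ : Finset (Fin n → Fin (k + 1))).filter
        (fun d => Function.Injective d ∧ Finset.univ.image d = S) := by
    rw [Finset.filter_filter]
  have hconst : ∀ d ∈ ((Finset.univ : Finset (Fin n → Fin (k + 1))).filter
        Function.Injective).filter (fun d => Finset.univ.image d = S),
      (∏ i, k.choose (d i : ℕ)) = ∏ j ∈ S, k.choose (j : ℕ) := by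
    intro d hd
    simp only [Finset.mem_filter, Finset.mem_univ, true_and] at hd
    rw [← hd.2, Finset.prod_image (fun a _ b _ h => hd.1 h)]
  rw [Finset.sum_congr rfl hconst, Finset.sum_const, hfib, fiber_card n k S hS.2,
    smul_eq_mul]

private lemma sum_reindex (n k : ℕ) :
    (∑ S ∈ Finset.powersetCard n (Finset.univ : Finset (Fin (k + 1))),
        ∏ j ∈ S, k.choose (j : ℕ))
      = ∑ S ∈ Finset.powersetCard n (Finset.range (k + 1)), ∏ j ∈ S, k.choose j := by
  have h : Finset.range (k + 1)
      = (Finset.univ : Finset (Fin (k + 1))).map Fin.valEmbedding := by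
    rw [Fin.map_valEmbedding_univ]
    exact (Nat.Iio_eq_range (k + 1)).symm
  rw [h, Finset.powersetCard_map, Finset.sum_map]
  refine Finset.sum_congr rfl fun S _ => ?_
  simp only [RelEmbedding.coe_toEmbedding, Finset.mapEmbedding_apply, Finset.prod_map,
    Fin.valEmbedding_apply]

private lemma part2 (n k : ℕ) :
    n.factorial * ∑ S ∈ Finset.powersetCard n (Finset.range (k + 1)),
        ∏ j ∈ S, k.choose j = setChi n k := by
  rw [← sum_reindex, ← sum_inj_eq, setChi_eq_sum_inj]

open Polynomial in
theorem stmt1 (k : ℕ) :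
    ((∑ n ∈ Finset.range (k + 2), C ((setChi n k : ℝ) / n.factorial) * X ^ n) =
      ∏ j ∈ Finset.range (k + 1), (1 + C ((k.choose j : ℝ)) * X)) ∧
    (∀ n : ℕ,
      n.factorial * ∑ S ∈ Finset.powersetCard n (Finset.range (k + 1)),
        ∏ j ∈ S, k.choose j = setChi n k) := by
  refine ⟨?_, fun n => part2 n k⟩
  have hdiv : ∀ n : ℕ, (setChi n k : ℝ) / n.factorial
      = ∑ S ∈ Finset.powersetCard n (Finset.range (k + 1)), ∏ j ∈ S, (k.choose j : ℝ) := by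
    intro n
    rw [div_eq_iff (by exact_mod_cast n.factorial_ne_zero)]
    have := part2 n k
    have h2 := congrArg (fun m : ℕ => (m : ℝ)) this
    push_cast at h2
    rw [← h2]
    ring
  calc (∑ n ∈ Finset.range (k + 2), C ((setChi n k : ℝ) / n.factorial) * X ^ n)
      = ∑ n ∈ Finset.range (k + 2),
          ∑ S ∈ Finset.powersetCard n (Finset.range (k + 1)),
            (∏ j ∈ S, C ((k.choose j : ℝ)) * X) := by
        refine Finset.sum_congr rfl fun n hn => ?_
        rw [hdiv n, map_sum, Finset.sum_mul]
        refine Finset.sum_congr rfl fun S hS => ?_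
        rw [Finset.mem_powersetCard] at hS
        rw [Finset.prod_mul_distrib, Finset.prod_const, hS.2, map_prod]
    _ = ∑ S ∈ (Finset.range (k + 1)).powerset,
          (∏ j ∈ S, C ((k.choose j : ℝ)) * X) := by
        rw [Finset.sum_powerset, Finset.card_range]
    _ = ∏ j ∈ Finset.range (k + 1), (1 + C ((k.choose j : ℝ)) * X) := by
        have := Finset.prod_add (fun j => C ((k.choose j : ℝ)) * X) (fun _ => (1 : ℝ[X]))
          (Finset.range (k + 1))
        simp only [Finset.prod_const_one, mul_one, add_comm] at this ⊢
        rw [this]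
end

section
/- For every nonnegative integer k, the finite sequence χ_0(k), χ_1(k), ..., χ_{k+1}(k) is logarithmically concave: χ_n(k)^2 ≥ χ_{n-1}(k) · χ_{n+1}(k) for 1 ≤ n ≤ k. -/
open Finset

/-! ### A Newton-type log-concavity inequality for elementary symmetric functions -/

lemma esymm_cons (a : ℕ) (s : Multiset ℕ) (n : ℕ) :
    (a ::ₘ s).esymm (n+1) = s.esymm (n+1) + a * s.esymm n := by
  simp only [Multiset.esymm, Multiset.powersetCard_cons, Multiset.map_add, Multiset.map_map,
    Multiset.sum_add, Function.comp_def, Multiset.prod_cons]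
  rw [Multiset.sum_map_mul_left]

lemma esymm_zero' (s : Multiset ℕ) : s.esymm 0 = 1 := by
  simp [Multiset.esymm]

lemma esymm_nil (n : ℕ) : (0 : Multiset ℕ).esymm (n+1) = 0 := by
  simp [Multiset.esymm, Multiset.powersetCard_zero_right]

lemma esymm_zero_step (s : Multiset ℕ) : ∀ n, s.esymm n = 0 → s.esymm (n+1) = 0 := by
  induction s using Multiset.induction with
  | empty => intro n _; exact esymm_nil n
  | cons a s ih =>
    intro n h
    match n with
    | 0 => simp [esymm_zero'] at h
    | m+1 =>
      rw [esymm_cons] at h ⊢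
      have h1 : s.esymm (m+1) = 0 := by omega
      have h2 : a * s.esymm m = 0 := by omega
      rw [ih (m+1) h1]
      rcases Nat.mul_eq_zero.1 h2 with h3 | h3
      · simp [h3]
      · rw [ih m h3]; simp

lemma esymm_newton (s : Multiset ℕ) :
    ∀ n, (n+2) * (s.esymm n * s.esymm (n+2)) ≤ (n+1) * s.esymm (n+1)^2 := by
  induction s using Multiset.induction with
  | empty => intro n; rw [esymm_nil]; simp
  | cons a s ih =>
    intro n
    match n with
    | 0 =>
      rw [esymm_zero', esymm_cons, esymm_cons, esymm_zero']
      have := ih 0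
      rw [esymm_zero'] at this
      nlinarith [this]
    | m+1 =>
      rw [esymm_cons, esymm_cons, esymm_cons]
      have h1 := ih m
      have h2 := ih (m+1)
      have hcross : (m+3) * (s.esymm m * s.esymm (m+3)) ≤ (m+1) * (s.esymm (m+1) * s.esymm (m+2)) := by
        rcases Nat.eq_zero_or_pos (s.esymm (m+1) * s.esymm (m+2)) with h | h
        · rcases Nat.mul_eq_zero.1 h with h3 | h3
          · have := esymm_zero_step s (m+2) (esymm_zero_step s (m+1) h3)
            simp [this]
          · have := esymm_zero_step s (m+2) h3
            simp [this]
        · have key : ((m+2) * (s.esymm (m+1) * s.esymm (m+2))) * ((m+3) * (s.esymm m * s.esymm (m+3)))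
              ≤ ((m+2) * (s.esymm (m+1) * s.esymm (m+2))) * ((m+1) * (s.esymm (m+1) * s.esymm (m+2))) := by
            nlinarith [h1, h2, Nat.mul_le_mul h1 h2]
          exact Nat.le_of_mul_le_mul_left key (by positivity)
      have haux : (m+3) * (s.esymm m * s.esymm (m+2)) ≤ (m+2) * s.esymm (m+1)^2 := by
        have key : (m+2) * ((m+3) * (s.esymm m * s.esymm (m+2))) ≤ (m+2) * ((m+2) * s.esymm (m+1)^2) := by
          nlinarith [h1]
        exact Nat.le_of_mul_le_mul_left key (by omega)
      nlinarith [h2, hcross, haux, Nat.mul_le_mul_left (a*a) haux, Nat.mul_le_mul_left a hcross]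

/-! ### Counting lemmas -/

/-- Embeddings with a prescribed image are equivalent to bijections onto the image. -/
noncomputable def embFixedImageEquiv {n m : ℕ} (t : Finset (Fin m)) :
    {f : Fin n ↪ Fin m // Finset.univ.map f = t} ≃ (Fin n ≃ {x // x ∈ t}) where
  toFun f := Equiv.ofBijective
    (fun i => ⟨f.1 i, by have := mem_map_of_mem f.1 (mem_univ i); rwa [f.2] at this⟩)
    ⟨fun i j h => f.1.injective (by simpa using congrArg Subtype.val h),
     fun x => by
        have hx : (x : Fin m) ∈ Finset.univ.map f.1 := by rw [f.2]; exact x.2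
        obtain ⟨i, _, hi⟩ := Finset.mem_map.1 hx
        exact ⟨i, Subtype.ext hi⟩⟩
  invFun e := ⟨⟨fun i => (e i : Fin m), fun i j h => e.injective (Subtype.ext h)⟩, by
    ext x
    simp only [Finset.mem_map, Finset.mem_univ, true_and, Function.Embedding.coeFn_mk]
    constructor
    · rintro ⟨i, rfl⟩; exact (e i).2
    · intro hx
      obtain ⟨i, hi⟩ := e.surjective ⟨x, hx⟩
      exact ⟨i, by show ((e i : {x // x ∈ t}) : Fin m) = x; rw [hi]⟩⟩
  left_inv f := by
    apply Subtype.ext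
    apply Function.Embedding.ext
    intro i
    rfl
  right_inv e := by
    apply Equiv.ext
    intro i
    apply Subtype.ext
    rfl

lemma card_emb_fixed_image {n m : ℕ} (t : Finset (Fin m)) (ht : t.card = n) :
    (Finset.univ.filter fun f : Fin n ↪ Fin m => Finset.univ.map f = t).card = n.factorial := by
  rw [← Fintype.card_subtype]
  rw [Fintype.card_congr (embFixedImageEquiv t)]
  have : Fintype.card {x // x ∈ t} = Fintype.card (Fin n) := by
    simp [Fintype.card_coe, ht]
  rw [Fintype.card_equiv (Fintype.equivOfCardEq this).symm, Fintype.card_fin]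

lemma sum_emb (n m : ℕ) (w : Fin m → ℕ) :
    ∑ f : Fin n ↪ Fin m, ∏ i, w (f i)
      = ∑ t ∈ Finset.powersetCard n (Finset.univ : Finset (Fin m)), n.factorial * ∏ x ∈ t, w x := by
  rw [← Finset.sum_fiberwise_of_maps_to
    (g := fun f : Fin n ↪ Fin m => Finset.univ.map f)
    (fun f _ => Finset.mem_powersetCard_univ.2
      (by rw [Finset.card_map, Finset.card_univ, Fintype.card_fin])) (fun f => ∏ i, w (f i))]
  refine Finset.sum_congr rfl fun t ht => ?_
  have ht' : t.card = n := Finset.mem_powersetCard_univ.1 ht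
  have : ∀ f ∈ Finset.univ.filter fun f : Fin n ↪ Fin m => Finset.univ.map f = t,
      (∏ i, w (f i)) = ∏ x ∈ t, w x := by
    intro f hf
    have hf' : Finset.univ.map f = t := (Finset.mem_filter.1 hf).2
    rw [← hf', Finset.prod_map]
  rw [Finset.sum_congr rfl this, Finset.sum_const, card_emb_fixed_image t ht', smul_eq_mul]

noncomputable def chiEquiv (n k : ℕ) :
    {c : Fin n → Finset (Fin k) // ∀ i j : Fin n, i ≠ j → (c i).card ≠ (c j).card} ≃
    Σ f : Fin n ↪ Fin (k+1), Π i : Fin n, {s : Finset (Fin k) // s.card = (f i : ℕ)} where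
  toFun c := ⟨⟨fun i => ⟨(c.1 i).card,
      Nat.lt_succ_of_le (le_trans (Finset.card_le_univ _) (le_of_eq (Finset.card_fin k)))⟩,
      fun i j h => by
        by_contra hij
        exact c.2 i j hij (by simpa using congrArg Fin.val h)⟩,
    fun i => ⟨c.1 i, rfl⟩⟩
  invFun p := ⟨fun i => (p.2 i).1, fun i j hij hc => hij (p.1.injective (Fin.val_injective
    (by rw [← (p.2 i).2, ← (p.2 j).2]; exact hc)))⟩
  left_inv c := rfl
  right_inv p := by
    obtain ⟨f, g⟩ := p
    refine Sigma.ext (Function.Embedding.ext fun i => Fin.ext ?_) ?_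
    · exact (g i).2
    · refine Function.hfunext rfl fun i i' hii' => ?_
      cases eq_of_heq hii'
      exact (Subtype.heq_iff_coe_eq
        (fun s => by show s.card = (g i).1.card ↔ s.card = (f i : ℕ); rw [(g i).2])).2 rfl

lemma setChi_eq_sum (n k : ℕ) :
    setChi n k = ∑ f : Fin n ↪ Fin (k+1), ∏ i : Fin n, k.choose ((f i : ℕ)) := by
  rw [setChi, Nat.card_congr (chiEquiv n k), Nat.card_eq_fintype_card, Fintype.card_sigma]
  refine Finset.sum_congr rfl fun f _ => ?_
  rw [Fintype.card_pi]
  refine Finset.prod_congr rfl fun i _ => ?_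
  rw [Fintype.card_finset_len, Fintype.card_fin]

lemma setChi_eq_esymm (n k : ℕ) :
    setChi n k = n.factorial *
      ((Finset.univ : Finset (Fin (k+1))).val.map (fun i : Fin (k+1) => k.choose (i : ℕ))).esymm n := by
  rw [setChi_eq_sum, sum_emb n (k+1) (fun i : Fin (k+1) => k.choose (i : ℕ)), ← Finset.mul_sum,
    Finset.esymm_map_val]

theorem stmt3 (k n : ℕ) (h1 : 1 ≤ n) (h2 : n ≤ k) :
    setChi (n - 1) k * setChi (n + 1) k ≤ setChi n k ^ 2 := by
  obtain ⟨m, rfl⟩ : ∃ m, n = m + 1 := ⟨n - 1, by omega⟩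
  simp only [Nat.add_sub_cancel]
  set M := ((Finset.univ : Finset (Fin (k+1))).val.map (fun i : Fin (k+1) => k.choose (i : ℕ))) with hM
  have h := esymm_newton M m
  rw [setChi_eq_esymm, setChi_eq_esymm, setChi_eq_esymm, ← hM]
  have key : ((m+1) * m.factorial^2) * ((m+2) * (M.esymm m * M.esymm (m+2)))
      ≤ ((m+1) * m.factorial^2) * ((m+1) * M.esymm (m+1)^2) :=
    Nat.mul_le_mul_left _ h
  have hf1 : (m+1).factorial = (m+1) * m.factorial := Nat.factorial_succ m
  have hf2 : (m+1+1).factorial = (m+2) * ((m+1) * m.factorial) := by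
    rw [Nat.factorial_succ, hf1]
  rw [hf1, hf2]
  nlinarith [key]
end

section
/- χ_3(k) = 2^{3k} − 3·2^k·C(2k,k) + 2·Fr(k,3) for every nonnegative integer k, where Fr(k,3) = ∑_{j=0}^{k} C(k,j)^3. -/
open Finset



lemma sum_choose_sq (k : ℕ) :
    ∑ j ∈ range (k+1), k.choose j * k.choose j = (2*k).choose k := by
  rw [two_mul, Nat.add_choose_eq, Finset.Nat.sum_antidiagonal_eq_sum_range_succ_mk]
  exact Finset.sum_congr rfl fun i hi => by
    rw [Nat.choose_symm (Nat.le_of_lt_succ (mem_range.mp hi))]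

def tripleEquiv (α : Type*) : (Fin 3 → α) ≃ α × α × α where
  toFun f := (f 0, f 1, f 2)
  invFun p := ![p.1, p.2.1, p.2.2]
  left_inv f := by funext i; fin_cases i <;> rfl
  right_inv p := rfl

lemma card_filter_card_eq_s7 (k j : ℕ) :
    (Finset.univ.filter (fun S : Finset (Fin k) => S.card = j)).card = k.choose j := by
  rw [← Finset.powerset_univ, ← Finset.powersetCard_eq_filter]
  simp [Finset.card_powersetCard]

lemma setChi_three (k : ℕ) :
    setChi 3 k = (Finset.univ.filter
      (fun p : Finset (Fin k) × Finset (Fin k) × Finset (Fin k) =>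
        p.1.card ≠ p.2.1.card ∧ p.1.card ≠ p.2.2.card ∧ p.2.1.card ≠ p.2.2.card)).card := by
  have e := Equiv.subtypeEquiv (p := fun c : Fin 3 → Finset (Fin k) =>
      ∀ i j : Fin 3, i ≠ j → (c i).card ≠ (c j).card)
    (q := fun p : Finset (Fin k) × Finset (Fin k) × Finset (Fin k) =>
      p.1.card ≠ p.2.1.card ∧ p.1.card ≠ p.2.2.card ∧ p.2.1.card ≠ p.2.2.card)
    (tripleEquiv (Finset (Fin k)))
    (fun f => by
      show _ ↔ ((f 0).card ≠ (f 1).card ∧ (f 0).card ≠ (f 2).card ∧ (f 1).card ≠ (f 2).card)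
      constructor
      · intro h
        exact ⟨h 0 1 (by decide), h 0 2 (by decide), h 1 2 (by decide)⟩
      · rintro ⟨h1, h2, h3⟩ i j hij
        fin_cases i <;> fin_cases j <;> simp_all <;> (intro hh; simp_all))
  rw [setChi, Nat.card_congr e, Nat.card_eq_fintype_card, Fintype.card_subtype]

lemma filter_card_triple (k a b c : ℕ) :
    (Finset.univ.filter (fun p : Finset (Fin k) × Finset (Fin k) × Finset (Fin k) =>
        p.1.card = a ∧ p.2.1.card = b ∧ p.2.2.card = c)).card
      = k.choose a * (k.choose b * k.choose c) := by
  have : (Finset.univ.filter (fun p : Finset (Fin k) × Finset (Fin k) × Finset (Fin k) =>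
        p.1.card = a ∧ p.2.1.card = b ∧ p.2.2.card = c))
      = (Finset.univ.filter (fun S : Finset (Fin k) => S.card = a)) ×ˢ
        ((Finset.univ.filter (fun S : Finset (Fin k) => S.card = b)) ×ˢ
         (Finset.univ.filter (fun S : Finset (Fin k) => S.card = c))) := by
    ext p
    simp [Finset.mem_product, and_assoc]
  rw [this, Finset.card_product, Finset.card_product,
    card_filter_card_eq_s7, card_filter_card_eq_s7, card_filter_card_eq_s7]

lemma count_eq (k : ℕ) :
    setChi 3 k = ∑ q ∈ ((Finset.range (k+1)) ×ˢ (Finset.range (k+1)) ×ˢ (Finset.range (k+1))).filter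
        (fun q : ℕ × ℕ × ℕ => q.1 ≠ q.2.1 ∧ q.1 ≠ q.2.2 ∧ q.2.1 ≠ q.2.2),
      k.choose q.1 * (k.choose q.2.1 * k.choose q.2.2) := by
  rw [setChi_three]
  set t := ((Finset.range (k+1)) ×ˢ (Finset.range (k+1)) ×ˢ (Finset.range (k+1))).filter
      (fun q : ℕ × ℕ × ℕ => q.1 ≠ q.2.1 ∧ q.1 ≠ q.2.2 ∧ q.2.1 ≠ q.2.2) with ht
  have hmem : ∀ S : Finset (Fin k), S.card ∈ Finset.range (k+1) := fun S => by
    rw [Finset.mem_range, Nat.lt_succ_iff]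
    simpa using Finset.card_le_univ S
  rw [Finset.card_eq_sum_card_fiberwise
    (f := fun p : Finset (Fin k) × Finset (Fin k) × Finset (Fin k) =>
      (p.1.card, p.2.1.card, p.2.2.card)) (t := t)
    (fun p hp => by
      simp only [ht, Finset.mem_coe, Finset.mem_filter, Finset.mem_product]
      exact ⟨⟨hmem _, hmem _, hmem _⟩, (Finset.mem_filter.mp (Finset.mem_coe.mp hp)).2⟩)]
  apply Finset.sum_congr rfl
  intro q hq
  have hq' := (Finset.mem_filter.mp hq).2
  have : (Finset.univ.filter
      (fun p : Finset (Fin k) × Finset (Fin k) × Finset (Fin k) =>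
        p.1.card ≠ p.2.1.card ∧ p.1.card ≠ p.2.2.card ∧ p.2.1.card ≠ p.2.2.card)).filter
      (fun p => (p.1.card, p.2.1.card, p.2.2.card) = q)
      = Finset.univ.filter
        (fun p : Finset (Fin k) × Finset (Fin k) × Finset (Fin k) =>
          p.1.card = q.1 ∧ p.2.1.card = q.2.1 ∧ p.2.2.card = q.2.2) := by
    ext p
    simp only [Finset.mem_filter, Finset.mem_univ, true_and, Prod.ext_iff]
    constructor
    · rintro ⟨-, h⟩; exact h
    · rintro ⟨h1, h2, h3⟩
      refine ⟨?_, h1, h2, h3⟩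
      rw [h1, h2, h3]; exact hq'
  rw [this, filter_card_triple]

open Finset

lemma key_alg (R : Finset ℕ) (m : ℕ → ℤ) :
    ∑ a ∈ R, ∑ b ∈ R, ∑ c ∈ R,
        (if a ≠ b ∧ a ≠ c ∧ b ≠ c then m a * m b * m c else 0)
      = (∑ a ∈ R, m a) ^ 3 - 3 * (∑ a ∈ R, m a * m a) * (∑ a ∈ R, m a)
          + 2 * ∑ a ∈ R, m a * m a * m a := by
  have point : ∀ a b c : ℕ,
      (if a ≠ b ∧ a ≠ c ∧ b ≠ c then m a * m b * m c else 0)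
        = m a * m b * m c
          - (if a = b then m a * m b * m c else 0)
          - (if a = c then m a * m b * m c else 0)
          - (if b = c then m a * m b * m c else 0)
          + 2 * (if a = b ∧ a = c then m a * m b * m c else 0) := by
    intro a b c
    by_cases h1 : a = b <;> by_cases h2 : a = c <;> by_cases h3 : b = c <;>
      simp_all <;> ring
  simp only [point, Finset.sum_sub_distrib, Finset.sum_add_distrib, ← Finset.mul_sum]
  have hS3 : ∑ a ∈ R, ∑ b ∈ R, m a * m b * ∑ c ∈ R, m c = (∑ a ∈ R, m a) ^ 3 := by
    simp only [← Finset.sum_mul, ← Finset.mul_sum]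
    ring
  have h1 : ∑ a ∈ R, ∑ b ∈ R, ∑ c ∈ R, (if a = b then m a * m b * m c else 0)
      = (∑ a ∈ R, m a * m a) * (∑ a ∈ R, m a) := by
    have : ∀ a ∈ R, ∑ b ∈ R, ∑ c ∈ R, (if a = b then m a * m b * m c else 0)
        = m a * m a * ∑ c ∈ R, m c := by
      intro a ha
      have : ∀ b, ∑ c ∈ R, (if a = b then m a * m b * m c else 0)
          = if a = b then m a * m b * ∑ c ∈ R, m c else 0 := by
        intro b; split <;> simp [Finset.mul_sum]
      simp only [this, Finset.sum_ite_eq R a (fun b => m a * m b * ∑ c ∈ R, m c), ha, if_pos]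
    rw [Finset.sum_congr rfl this, ← Finset.sum_mul]
  have h2 : ∑ a ∈ R, ∑ b ∈ R, ∑ c ∈ R, (if a = c then m a * m b * m c else 0)
      = (∑ a ∈ R, m a * m a) * (∑ a ∈ R, m a) := by
    have : ∀ a ∈ R, ∑ b ∈ R, ∑ c ∈ R, (if a = c then m a * m b * m c else 0)
        = m a * m a * ∑ b ∈ R, m b := by
      intro a ha
      have inner : ∀ b, ∑ c ∈ R, (if a = c then m a * m b * m c else 0)
          = m a * m b * m a := by
        intro b
        rw [Finset.sum_ite_eq R a (fun c => m a * m b * m c), if_pos ha]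
      simp only [inner, ← Finset.mul_sum, ← Finset.sum_mul]
      ring
    rw [Finset.sum_congr rfl this, ← Finset.sum_mul]
  have h3 : ∑ a ∈ R, ∑ b ∈ R, ∑ c ∈ R, (if b = c then m a * m b * m c else 0)
      = (∑ a ∈ R, m a) * (∑ a ∈ R, m a * m a) := by
    have : ∀ a ∈ R, ∑ b ∈ R, ∑ c ∈ R, (if b = c then m a * m b * m c else 0)
        = m a * ∑ b ∈ R, m b * m b := by
      intro a ha
      have inner : ∀ b ∈ R, ∑ c ∈ R, (if b = c then m a * m b * m c else 0)
          = m a * (m b * m b) := by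
        intro b hb
        rw [Finset.sum_ite_eq R b (fun c => m a * m b * m c), if_pos hb]; ring
      rw [Finset.sum_congr rfl inner, ← Finset.mul_sum]
    rw [Finset.sum_congr rfl this, ← Finset.sum_mul]
  have h123 : ∑ a ∈ R, ∑ b ∈ R, ∑ c ∈ R, (if a = b ∧ a = c then m a * m b * m c else 0)
      = ∑ a ∈ R, m a * m a * m a := by
    apply Finset.sum_congr rfl
    intro a ha
    have inner : ∀ b, ∑ c ∈ R, (if a = b ∧ a = c then m a * m b * m c else 0)
        = if a = b then m a * m b * m a else 0 := by
      intro b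
      simp only [ite_and]
      split
      · rw [Finset.sum_ite_eq R a (fun c => m a * m b * m c), if_pos ha]
      · simp
    rw [Finset.sum_congr rfl (fun b _ => inner b),
      Finset.sum_ite_eq R a (fun b => m a * m b * m a), if_pos ha]
  rw [hS3, h1, h2, h3, h123]
  ring

theorem stmt7 (k : ℕ) :
    (setChi 3 k : ℤ) =
      2 ^ (3 * k) - 3 * 2 ^ k * (2 * k).choose k +
        2 * ∑ j ∈ Finset.range (k + 1), ((k.choose j : ℤ)) ^ 3 := by
  have hz : (setChi 3 k : ℤ) = ∑ q ∈ ((Finset.range (k+1)) ×ˢ (Finset.range (k+1)) ×ˢ (Finset.range (k+1))).filter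
        (fun q : ℕ × ℕ × ℕ => q.1 ≠ q.2.1 ∧ q.1 ≠ q.2.2 ∧ q.2.1 ≠ q.2.2),
      (k.choose q.1 : ℤ) * (k.choose q.2.1 : ℤ) * (k.choose q.2.2 : ℤ) := by
    rw [count_eq k]
    push_cast
    exact Finset.sum_congr rfl fun q _ => by ring
  rw [hz, Finset.sum_filter]
  simp only [Finset.sum_product]
  rw [key_alg (Finset.range (k+1)) (fun j => (k.choose j : ℤ))]
  have hS : ∑ j ∈ Finset.range (k+1), (k.choose j : ℤ) = 2 ^ k := by
    exact_mod_cast congrArg (Nat.cast : ℕ → ℤ) (Nat.sum_range_choose k)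
  have hQ : ∑ j ∈ Finset.range (k+1), (k.choose j : ℤ) * (k.choose j : ℤ)
      = ((2*k).choose k : ℤ) := by
    exact_mod_cast congrArg (Nat.cast : ℕ → ℤ) (sum_choose_sq k)
  have hC : ∑ j ∈ Finset.range (k+1), (k.choose j : ℤ) * (k.choose j : ℤ) * (k.choose j : ℤ)
      = ∑ j ∈ Finset.range (k+1), (k.choose j : ℤ) ^ 3 :=
    Finset.sum_congr rfl fun j _ => by ring
  rw [hS, hQ, hC, mul_comm 3 k, pow_mul]
  ring
end

section
/- Let Δ be a finite simple graph on vertex set V and let (α_j)_{j∈ℕ} be a finitely supported sequence in a commutative ring. Define χ_Δ(α) = ∑_f ∏_{i∈V} α_{f(i)}, summed over proper ℕ-colorings f of Δ (functions f : V → ℕ with f(i) ≠ f(j) for adjacent i,j), and β_r = ∑_{j} α_j^r. Then χ_Δ(α) = ∑_{π ∈ Π(Δ)} μ(0̂, π) ∏_{B∈π} β_{|B|}, where Π(Δ) is the lattice of partitions of V all of whose blocks induce connected subgraphs, ordered by refinement, μ is its Möbius function, and 0̂ is the partition into singletons. -/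
open scoped Classical

/-- A partition of the vertex set is connected when every block induces a connected
subgraph. -/
def ConnectedPartition {V : Type*} [Fintype V] [DecidableEq V] (G : SimpleGraph V)
    (π : Finpartition (Finset.univ : Finset V)) : Prop :=
  ∀ B ∈ π.parts, (G.induce (B : Set V)).Connected

section Aux

variable {V : Type*} [Fintype V] [DecidableEq V]

/-- The subgraph of `G` consisting of edges monochromatic under `f`. -/
private def monoGraph (G : SimpleGraph V) (f : V → ℕ) : SimpleGraph V where
  Adj i j := G.Adj i j ∧ f i = f j
  symm := ⟨fun _ _ h => ⟨h.1.symm, h.2.symm⟩⟩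
  loopless := ⟨fun i h => G.loopless.irrefl i h.1⟩

/-- The partition of `V` into connected monochromatic pieces. -/
private noncomputable def monoPart (G : SimpleGraph V) (f : V → ℕ) :
    Finpartition (Finset.univ : Finset V) :=
  Finpartition.ofSetoid (monoGraph G f).reachableSetoid

private lemma monoGraph_reachable_apply_eq {G : SimpleGraph V} {f : V → ℕ} {x y : V}
    (h : (monoGraph G f).Reachable x y) : f x = f y := by
  obtain ⟨w⟩ := h
  induction w with
  | nil => rfl
  | cons h p ih => exact h.2.trans ih

private lemma mem_monoPart_iff {G : SimpleGraph V} {f : V → ℕ} {a b : V} :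
    b ∈ (monoPart G f).part a ↔ (monoGraph G f).Reachable a b :=
  Finpartition.mem_part_ofSetoid_iff_rel

private lemma induce_reachable_of_walk {H G : SimpleGraph V}
    (hHG : ∀ x y, H.Adj x y → G.Adj x y) {B : Set V} :
    ∀ {x y : V} (w : H.Walk x y), (∀ v ∈ w.support, v ∈ B) →
      ∀ (hx : x ∈ B) (hy : y ∈ B), (G.induce B).Reachable ⟨x, hx⟩ ⟨y, hy⟩ := by
  intro x y w
  induction w with
  | nil => exact fun _ hx hy => SimpleGraph.Reachable.refl _
  | @cons a c b h p ih =>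
    intro hw hx hy
    have hc : c ∈ B := hw c (by simp [SimpleGraph.Walk.support_cons])
    have hadj : (G.induce B).Adj ⟨a, hx⟩ ⟨c, hc⟩ := hHG _ _ h
    exact hadj.reachable.trans
      (ih (fun v hv => hw v (by simp [SimpleGraph.Walk.support_cons, hv])) hc hy)

private lemma monoPart_connected (G : SimpleGraph V) (f : V → ℕ) :
    ConnectedPartition G (monoPart G f) := by
  intro B hB
  obtain ⟨a, ha⟩ := (monoPart G f).nonempty_of_mem_parts hB
  have hpart : (monoPart G f).part a = B :=
    (monoPart G f).part_eq_of_mem hB ha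
  have hne : Nonempty (↑(B : Set V)) := ⟨⟨a, ha⟩⟩
  rw [SimpleGraph.connected_iff]
  refine ⟨?_, hne⟩
  rintro ⟨x, hx⟩ ⟨y, hy⟩
  rw [Finset.mem_coe, ← hpart, mem_monoPart_iff] at hx hy
  obtain ⟨w⟩ := hx.symm.trans hy
  refine induce_reachable_of_walk (H := monoGraph G f) (fun _ _ h => h.1) w
    (fun v hv => ?_) _ _
  have : (monoGraph G f).Reachable x v := ⟨w.takeUntil v hv⟩
  rw [Finset.mem_coe, ← hpart, mem_monoPart_iff]
  exact hx.trans this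

private lemma mono_reach {G : SimpleGraph V} {f : V → ℕ} {B : Finset V}
    (hconst : ∀ x ∈ B, ∀ y ∈ B, f x = f y) :
    ∀ {a b : ↑(B : Set V)} (w : (G.induce (B : Set V)).Walk a b),
      (monoGraph G f).Reachable ↑a ↑b := by
  intro a b w
  induction w with
  | nil => exact SimpleGraph.Reachable.refl _
  | @cons a c b h p ih =>
    have hadj : (monoGraph G f).Adj ↑a ↑c :=
      ⟨h, hconst _ (Finset.mem_coe.mp a.2) _ (Finset.mem_coe.mp c.2)⟩
    exact hadj.reachable.trans ih

private lemma const_iff_le_monoPart {G : SimpleGraph V} {f : V → ℕ}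
    {π : Finpartition (Finset.univ : Finset V)} (hπ : ConnectedPartition G π) :
    (∀ B ∈ π.parts, ∀ x ∈ B, ∀ y ∈ B, f x = f y) ↔ π ≤ monoPart G f := by
  constructor
  · intro hconst B hB
    obtain ⟨a, ha⟩ := π.nonempty_of_mem_parts hB
    refine ⟨(monoPart G f).part a, (monoPart G f).part_mem.mpr (Finset.mem_univ a), ?_⟩
    intro y hy
    rw [mem_monoPart_iff]
    obtain ⟨w⟩ := (hπ B hB).preconnected ⟨a, ha⟩ ⟨y, hy⟩
    exact mono_reach (hconst B hB) w
  · intro hle B hB x hx y hy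
    obtain ⟨C, hC, hBC⟩ := hle hB
    obtain ⟨a, haC⟩ := (monoPart G f).nonempty_of_mem_parts hC
    have hpc := (monoPart G f).part_eq_of_mem hC haC
    have hx' : (monoGraph G f).Reachable a x := by
      rw [← mem_monoPart_iff, hpc]; exact hBC hx
    have hy' : (monoGraph G f).Reachable a y := by
      rw [← mem_monoPart_iff, hpc]; exact hBC hy
    exact (monoGraph_reachable_apply_eq hx').symm.trans (monoGraph_reachable_apply_eq hy')

private lemma monoPart_eq_bot_iff {G : SimpleGraph V} {f : V → ℕ} :
    monoPart G f = ⊥ ↔ ∀ i j, G.Adj i j → f i ≠ f j := by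
  constructor
  · intro h i j hadj hf
    have hj : j ∈ (monoPart G f).part i :=
      mem_monoPart_iff.mpr (SimpleGraph.Adj.reachable ⟨hadj, hf⟩)
    rw [h] at hj
    have hi : i ∈ (⊥ : Finpartition (Finset.univ : Finset V)).part i :=
      Finpartition.mem_part _ (Finset.mem_univ i)
    have hmem := (Finpartition.part_mem (P := (⊥ : Finpartition (Finset.univ : Finset V)))).mpr
      (Finset.mem_univ i)
    rw [Finpartition.mem_bot_iff] at hmem
    obtain ⟨a, -, hEq⟩ := hmem
    rw [← hEq, Finset.mem_singleton] at hj hi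
    exact G.loopless.irrefl j (by rwa [hi.trans hj.symm] at hadj)
  · intro hproper
    refine le_antisymm ?_ bot_le
    intro B hB
    obtain ⟨a, ha⟩ := (monoPart G f).nonempty_of_mem_parts hB
    refine ⟨{a}, Finpartition.mem_bot_iff.mpr ⟨a, Finset.mem_univ a, rfl⟩, ?_⟩
    intro y hy
    have hy' : y ∈ (monoPart G f).part a := by
      rw [(monoPart G f).part_eq_of_mem hB ha]; exact hy
    obtain ⟨w⟩ := mem_monoPart_iff.mp hy'
    cases w with
    | nil => exact Finset.mem_singleton_self a
    | cons h p => exact absurd h.2 (hproper _ _ h.1)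

private lemma prod_beta_eq_sum {R : Type*} [CommRing R] (α : ℕ → R) (S : Finset ℕ)
    (π : Finpartition (Finset.univ : Finset V)) :
    (∏ B ∈ π.parts, ∑ j ∈ S, α j ^ B.card) =
      ∑ f ∈ Fintype.piFinset (fun _ : V => S),
        if (∀ B ∈ π.parts, ∀ x ∈ B, ∀ y ∈ B, f x = f y) then ∏ i, α (f i) else 0 := by
  rw [← Finset.prod_coe_sort, Finset.prod_univ_sum, ← Finset.sum_filter]
  refine Finset.sum_bij'
    (i := fun φ _ => fun i : V => φ ⟨π.part i, π.part_mem.mpr (Finset.mem_univ i)⟩)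
    (j := fun f _ => fun B : ↥π.parts => f (π.nonempty_of_mem_parts B.2).choose)
    ?_ ?_ ?_ ?_ ?_
  · intro φ hφ
    rw [Finset.mem_filter]
    refine ⟨Fintype.mem_piFinset.mpr fun i => Fintype.mem_piFinset.mp hφ _, ?_⟩
    intro B hB x hx y hy
    exact congrArg φ (Subtype.ext ((π.part_eq_of_mem hB hx).trans
      (π.part_eq_of_mem hB hy).symm))
  · intro f hf
    rw [Finset.mem_filter] at hf
    exact Fintype.mem_piFinset.mpr fun B => Fintype.mem_piFinset.mp hf.1 _
  · intro φ hφ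
    funext B
    exact congrArg φ (Subtype.ext
      (π.part_eq_of_mem B.2 (π.nonempty_of_mem_parts B.2).choose_spec))
  · intro f hf
    rw [Finset.mem_filter] at hf
    funext i
    have hmem := π.part_mem.mpr (Finset.mem_univ i)
    exact hf.2 _ hmem _ (π.nonempty_of_mem_parts hmem).choose_spec
      _ (π.mem_part (Finset.mem_univ i))
  · intro φ hφ
    have hdisj : (π.parts : Set (Finset V)).PairwiseDisjoint id :=
      π.supIndep.pairwiseDisjoint
    set g : V → R := fun i => α (φ ⟨π.part i, π.part_mem.mpr (Finset.mem_univ i)⟩) with hg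
    have h1 : (∏ i, g i) = ∏ B ∈ π.parts, ∏ i ∈ B, g i := by
      have h2 := Finset.prod_biUnion (s := π.parts) (t := id) (f := g) hdisj
      rw [π.biUnion_parts] at h2
      exact h2
    rw [show (∏ i, α (φ ⟨π.part i, π.part_mem.mpr (Finset.mem_univ i)⟩)) = ∏ i, g i from rfl,
      h1, ← Finset.prod_coe_sort π.parts (fun B => ∏ i ∈ B, g i)]
    refine Finset.prod_congr rfl fun B _ => ?_
    rw [Finset.prod_congr rfl fun i hi =>
      show g i = α (φ B) from
        congrArg α (congrArg φ (Subtype.ext (π.part_eq_of_mem B.2 hi)))]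
    rw [Finset.prod_const]

end Aux

/-- The weighted proper-coloring sum `χ_Δ(α) = ∑_f ∏_i α_{f(i)}` over proper ℕ-colorings
of a finite simple graph equals `∑_{π connected} μ(0̂,π) ∏_{B∈π} β_{|B|}`, where
`β_r = ∑_j α_j^r` and `μ` is the Möbius function of the lattice of connected
partitions (characterized here by its defining recursion below `⊥`). -/
theorem stmt11 {V : Type*} [Fintype V] [DecidableEq V] (G : SimpleGraph V)
    {R : Type*} [CommRing R] (α : ℕ → R) (hα : (Function.support α).Finite)
    (β : ℕ → R) (hβ : ∀ r, β r = ∑ᶠ j : ℕ, α j ^ r)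
    (μ : Finpartition (Finset.univ : Finset V) → ℤ)
    (hμ : ∀ π : Finpartition (Finset.univ : Finset V), ConnectedPartition G π →
      (∑ σ : Finpartition (Finset.univ : Finset V),
          if ConnectedPartition G σ ∧ σ ≤ π then μ σ else 0) =
        if π = ⊥ then 1 else 0) :
    (∑ᶠ (f : V → ℕ) (_ : ∀ i j : V, G.Adj i j → f i ≠ f j), ∏ i, α (f i)) =
      ∑ π : Finpartition (Finset.univ : Finset V),
        if ConnectedPartition G π then μ π • ∏ B ∈ π.parts, β B.card else 0 := by
  classical
  set S : Finset ℕ := hα.toFinset with hS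
  set F : Finset (V → ℕ) := Fintype.piFinset (fun _ : V => S) with hF
  -- Step A: the left-hand side as a finite sum
  have hLHS : (∑ᶠ (f : V → ℕ) (_ : ∀ i j : V, G.Adj i j → f i ≠ f j), ∏ i, α (f i)) =
      ∑ f ∈ F, if (∀ i j : V, G.Adj i j → f i ≠ f j) then ∏ i, α (f i) else 0 := by
    have h1 : ∀ f : V → ℕ,
        (∑ᶠ _ : (∀ i j : V, G.Adj i j → f i ≠ f j), ∏ i, α (f i)) =
          if (∀ i j : V, G.Adj i j → f i ≠ f j) then ∏ i, α (f i) else 0 :=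
      fun f => finsum_eq_if
    rw [finsum_congr h1]
    apply finsum_eq_sum_of_support_subset
    intro f hf
    simp only [Function.mem_support] at hf
    have hprod : (∏ i, α (f i)) ≠ 0 := by
      intro h0
      rw [h0] at hf
      simp at hf
    rw [hF, Finset.mem_coe]
    refine Fintype.mem_piFinset.mpr fun i => ?_
    rw [hS, Set.Finite.mem_toFinset, Function.mem_support]
    intro h0
    exact hprod (Finset.prod_eq_zero (Finset.mem_univ i) h0)
  -- Step B: β on part sizes as a finite sum
  have hβ' : ∀ π : Finpartition (Finset.univ : Finset V), ∀ B ∈ π.parts,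
      β B.card = ∑ j ∈ S, α j ^ B.card := by
    intro π B hB
    rw [hβ]
    apply finsum_eq_sum_of_support_subset
    intro j hj
    simp only [Function.mem_support] at hj
    rw [hS, Finset.mem_coe, Set.Finite.mem_toFinset, Function.mem_support]
    intro h0
    exact hj (by rw [h0, zero_pow (π.nonempty_of_mem_parts hB).card_pos.ne'])
  -- the key product identity
  have key : ∀ π : Finpartition (Finset.univ : Finset V), ConnectedPartition G π →
      (∏ B ∈ π.parts, β B.card) = ∑ f ∈ F,
        if (∀ B ∈ π.parts, ∀ x ∈ B, ∀ y ∈ B, f x = f y) then ∏ i, α (f i) else 0 := by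
    intro π hπ
    rw [Finset.prod_congr rfl (hβ' π), prod_beta_eq_sum α S π]
  -- rewrite each term of the right-hand side
  have step1 : ∀ π : Finpartition (Finset.univ : Finset V),
      (if ConnectedPartition G π then μ π • ∏ B ∈ π.parts, β B.card else 0) =
        ∑ f ∈ F, (if ConnectedPartition G π ∧ π ≤ monoPart G f then μ π else 0) •
          (∏ i, α (f i)) := by
    intro π
    by_cases hπ : ConnectedPartition G π
    · rw [if_pos hπ, key π hπ, Finset.smul_sum]
      refine Finset.sum_congr rfl fun f _ => ?_
      by_cases hle : π ≤ monoPart G f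
      · rw [if_pos ((const_iff_le_monoPart hπ).mpr hle), if_pos ⟨hπ, hle⟩]
      · rw [if_neg (fun hc => hle ((const_iff_le_monoPart hπ).mp hc)),
          if_neg (fun hc => hle hc.2), smul_zero, zero_smul]
    · rw [if_neg hπ]
      symm
      refine Finset.sum_eq_zero fun f _ => ?_
      rw [if_neg (fun hc => hπ hc.1), zero_smul]
  have hR : (∑ π : Finpartition (Finset.univ : Finset V),
      if ConnectedPartition G π then μ π • ∏ B ∈ π.parts, β B.card else 0) =
      ∑ f ∈ F, ∑ π : Finpartition (Finset.univ : Finset V),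
        (if ConnectedPartition G π ∧ π ≤ monoPart G f then μ π else 0) •
          (∏ i, α (f i)) := by
    rw [Finset.sum_congr rfl fun π _ => step1 π]
    exact Finset.sum_comm
  rw [hLHS, hR]
  refine Finset.sum_congr rfl fun f _ => ?_
  rw [← Finset.sum_smul, hμ (monoPart G f) (monoPart_connected G f)]
  by_cases hp : ∀ i j : V, G.Adj i j → f i ≠ f j
  · rw [if_pos hp, if_pos (monoPart_eq_bot_iff.mpr hp), one_smul]
  · rw [if_neg hp, if_neg (fun h => hp (monoPart_eq_bot_iff.mp h)), zero_smul]
end
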